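/- Let m > 0 and ξ, v ∈ ℝ³, and let E := √(m² + |ξ|²). For l ∈ {1,2,3} set D_l(ξ) := − (m ξ_l)/(2√2 · E^{5/2} (E+m)^{1/2}) · I₄ + (ξ_l (2E+m))/(2√2 · E^{5/2} (E+m)^{3/2}) · (ξ·α)β − (2E(E+m))^{-1/2} · α_l β (this is the partial derivative ∂_{ξ_l} u₀(ξ)). Then the gradient-coupling term of the effective semirelativistic Hamiltonian satisfies the 4×4 matrix identity −i Σ_{l=1}^3 v_l · π_ref D_l(ξ) u₀(ξ)* π_ref = (1/(2E(E+m))) · M, where M is the 4×4 matrix whose upper-left 2×2 block is (v × ξ)·σ := Σ_{k=1}^3 (v × ξ)_k σ_k (with v × ξ the cross product in ℝ³) and whose remaining entries are zero. -/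

import Mathlib

noncomputable section
open Complex Matrix

/-- The Pauli matrices `σ₁, σ₂, σ₃`. -/
def pauli : Fin 3 → Matrix (Fin 2) (Fin 2) ℂ :=
  ![!![0, 1; 1, 0], !![0, -Complex.I; Complex.I, 0], !![1, 0; 0, -1]]

/-- The Dirac matrices `α_j = [[0, σ_j],[σ_j, 0]]` in 2×2 block form. -/
def diracAlpha (j : Fin 3) : Matrix (Fin 4) (Fin 4) ℂ :=
  Matrix.reindex finSumFinEquiv finSumFinEquiv
    (Matrix.fromBlocks 0 (pauli j) (pauli j) 0)

/-- The Dirac matrix `β = diag(1,1,-1,-1)`. -/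
def diracBeta : Matrix (Fin 4) (Fin 4) ℂ :=
  Matrix.reindex finSumFinEquiv finSumFinEquiv
    (Matrix.fromBlocks (1 : Matrix (Fin 2) (Fin 2) ℂ) 0 0
      (-1 : Matrix (Fin 2) (Fin 2) ℂ))

/-- The reference projection `π_ref = diag(1,1,0,0)`. -/
def piRef : Matrix (Fin 4) (Fin 4) ℂ :=
  Matrix.reindex finSumFinEquiv finSumFinEquiv
    (Matrix.fromBlocks (1 : Matrix (Fin 2) (Fin 2) ℂ) 0 0
      (0 : Matrix (Fin 2) (Fin 2) ℂ))

/-- `ξ·α := Σ_j ξ_j α_j`. -/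
def xiDotAlpha (ξ : Fin 3 → ℝ) : Matrix (Fin 4) (Fin 4) ℂ :=
  ∑ j, (ξ j : ℂ) • diracAlpha j

/-- The free Dirac Hamiltonian symbol `H₀(ξ) := mβ + ξ·α`. -/
def diracH0 (m : ℝ) (ξ : Fin 3 → ℝ) : Matrix (Fin 4) (Fin 4) ℂ :=
  (m : ℂ) • diracBeta + xiDotAlpha ξ

/-- The relativistic dispersion `E := √(m² + |ξ|²)`. -/
def Ed (m : ℝ) (ξ : Fin 3 → ℝ) : ℝ := Real.sqrt (m ^ 2 + ∑ j, ξ j ^ 2)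

/-- The Foldy–Wouthuysen unitary `u₀(ξ) := (2E(E+m))^{-1/2} ((E+m) I₄ - (ξ·α)β)`. -/
def u0 (m : ℝ) (ξ : Fin 3 → ℝ) : Matrix (Fin 4) (Fin 4) ℂ :=
  (((Real.sqrt (2 * Ed m ξ * (Ed m ξ + m)))⁻¹ : ℝ) : ℂ) •
    (((Ed m ξ + m : ℝ) : ℂ) • (1 : Matrix (Fin 4) (Fin 4) ℂ) - xiDotAlpha ξ * diracBeta)

/-- The matrix `D_l(ξ) = ∂_{ξ_l}u₀(ξ)`:
`D_l = -(mξ_l)/(2√2 E^{5/2}(E+m)^{1/2}) I₄ + (ξ_l(2E+m))/(2√2 E^{5/2}(E+m)^{3/2}) (ξ·α)β - (2E(E+m))^{-1/2} α_l β`. -/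
def Dmat (m : ℝ) (ξ : Fin 3 → ℝ) (l : Fin 3) : Matrix (Fin 4) (Fin 4) ℂ :=
  ((-(m * ξ l) / (2 * Real.sqrt 2 * Ed m ξ ^ ((5:ℝ)/2) * (Ed m ξ + m) ^ ((1:ℝ)/2)) : ℝ) : ℂ) •
      (1 : Matrix (Fin 4) (Fin 4) ℂ)
    + ((ξ l * (2 * Ed m ξ + m) / (2 * Real.sqrt 2 * Ed m ξ ^ ((5:ℝ)/2) * (Ed m ξ + m) ^ ((3:ℝ)/2)) : ℝ) : ℂ) •
      (xiDotAlpha ξ * diracBeta)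
    - (((Real.sqrt (2 * Ed m ξ * (Ed m ξ + m)))⁻¹ : ℝ) : ℂ) • (diracAlpha l * diracBeta)

/-- The cross product on `ℝ³`. -/
def cross3 (v w : Fin 3 → ℝ) : Fin 3 → ℝ :=
  ![v 1 * w 2 - v 2 * w 1, v 2 * w 0 - v 0 * w 2, v 0 * w 1 - v 1 * w 0]


lemma sy0 : (finSumFinEquiv.symm (0 : Fin 4) : (Fin 2) ⊕ (Fin 2)) = Sum.inl 0 := rfl
lemma sy1 : (finSumFinEquiv.symm (1 : Fin 4) : (Fin 2) ⊕ (Fin 2)) = Sum.inl 1 := rfl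
lemma sy2 : (finSumFinEquiv.symm (2 : Fin 4) : (Fin 2) ⊕ (Fin 2)) = Sum.inr 0 := rfl
lemma sy3 : (finSumFinEquiv.symm (3 : Fin 4) : (Fin 2) ⊕ (Fin 2)) = Sum.inr 1 := rfl

lemma blocks_eq (A : Matrix (Fin 2) (Fin 2) ℂ) :
    Matrix.reindex finSumFinEquiv finSumFinEquiv
      (Matrix.fromBlocks A 0 0 (0 : Matrix (Fin 2) (Fin 2) ℂ))
    = !![A 0 0, A 0 1, 0, 0; A 1 0, A 1 1, 0, 0; 0,0,0,0; 0,0,0,0] := by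
  ext i k
  fin_cases i <;> fin_cases k <;>
    simp [Matrix.reindex_apply, Matrix.submatrix_apply, sy0, sy1, sy2, sy3,
      Matrix.fromBlocks, Matrix.vecHead, Matrix.vecTail, Function.comp]

lemma alpha_eq (j : Fin 3) : diracAlpha j =
    !![0,0,pauli j 0 0, pauli j 0 1; 0,0,pauli j 1 0, pauli j 1 1;
       pauli j 0 0, pauli j 0 1,0,0; pauli j 1 0, pauli j 1 1,0,0] := by
  ext i k
  fin_cases i <;> fin_cases k <;>
    simp [diracAlpha, Matrix.reindex_apply, Matrix.submatrix_apply, sy0, sy1, sy2, sy3,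
      Matrix.fromBlocks, Matrix.vecHead, Matrix.vecTail, Function.comp]

lemma beta_eq : diracBeta = !![1,0,0,0; 0,1,0,0; 0,0,-1,0; 0,0,0,-1] := by
  ext i k
  fin_cases i <;> fin_cases k <;>
    simp [diracBeta, Matrix.reindex_apply, Matrix.submatrix_apply, sy0, sy1, sy2, sy3,
      Matrix.fromBlocks, Matrix.vecHead, Matrix.vecTail, Function.comp]

lemma piRef_eq : piRef = !![1,0,0,0; 0,1,0,0; 0,0,0,0; 0,0,0,0] := by
  ext i k
  fin_cases i <;> fin_cases k <;>
    simp [piRef, Matrix.reindex_apply, Matrix.submatrix_apply, sy0, sy1, sy2, sy3,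
      Matrix.fromBlocks, Matrix.vecHead, Matrix.vecTail, Function.comp, Matrix.one_apply]

/-- literal form of `(e+m)•1 + (ξ·α)β` (which is `s · u₀(ξ)ᴴ`). -/
def Ulit (m : ℝ) (ξ : Fin 3 → ℝ) : Matrix (Fin 4) (Fin 4) ℂ :=
  !![((Ed m ξ + m : ℝ) : ℂ), 0, -(ξ 2 : ℂ), -((ξ 0 : ℂ) - Complex.I * (ξ 1 : ℂ));
     0, ((Ed m ξ + m : ℝ) : ℂ), -((ξ 0 : ℂ) + Complex.I * (ξ 1 : ℂ)), (ξ 2 : ℂ);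
     (ξ 2 : ℂ), ((ξ 0 : ℂ) - Complex.I * (ξ 1 : ℂ)), ((Ed m ξ + m : ℝ) : ℂ), 0;
     ((ξ 0 : ℂ) + Complex.I * (ξ 1 : ℂ)), -(ξ 2 : ℂ), 0, ((Ed m ξ + m : ℝ) : ℂ)]

/-- literal form of `2E²(E+m)s · D_l` (all denominators cleared). -/
def Alit (m : ℝ) (ξ : Fin 3 → ℝ) (l : Fin 3) : Matrix (Fin 4) (Fin 4) ℂ :=
  !![((-(m * ξ l) * (Ed m ξ + m) : ℝ) : ℂ), 0,
       -((ξ l * (2 * Ed m ξ + m) : ℝ) : ℂ) * (ξ 2 : ℂ) + ((2 * Ed m ξ ^ 2 * (Ed m ξ + m) : ℝ) : ℂ) * pauli l 0 0,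
       -((ξ l * (2 * Ed m ξ + m) : ℝ) : ℂ) * ((ξ 0 : ℂ) - Complex.I * (ξ 1 : ℂ)) + ((2 * Ed m ξ ^ 2 * (Ed m ξ + m) : ℝ) : ℂ) * pauli l 0 1;
     0, ((-(m * ξ l) * (Ed m ξ + m) : ℝ) : ℂ),
       -((ξ l * (2 * Ed m ξ + m) : ℝ) : ℂ) * ((ξ 0 : ℂ) + Complex.I * (ξ 1 : ℂ)) + ((2 * Ed m ξ ^ 2 * (Ed m ξ + m) : ℝ) : ℂ) * pauli l 1 0,
       -((ξ l * (2 * Ed m ξ + m) : ℝ) : ℂ) * (-(ξ 2 : ℂ)) + ((2 * Ed m ξ ^ 2 * (Ed m ξ + m) : ℝ) : ℂ) * pauli l 1 1;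
     ((ξ l * (2 * Ed m ξ + m) : ℝ) : ℂ) * (ξ 2 : ℂ) - ((2 * Ed m ξ ^ 2 * (Ed m ξ + m) : ℝ) : ℂ) * pauli l 0 0,
       ((ξ l * (2 * Ed m ξ + m) : ℝ) : ℂ) * ((ξ 0 : ℂ) - Complex.I * (ξ 1 : ℂ)) - ((2 * Ed m ξ ^ 2 * (Ed m ξ + m) : ℝ) : ℂ) * pauli l 0 1,
       ((-(m * ξ l) * (Ed m ξ + m) : ℝ) : ℂ), 0;
     ((ξ l * (2 * Ed m ξ + m) : ℝ) : ℂ) * ((ξ 0 : ℂ) + Complex.I * (ξ 1 : ℂ)) - ((2 * Ed m ξ ^ 2 * (Ed m ξ + m) : ℝ) : ℂ) * pauli l 1 0,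
       ((ξ l * (2 * Ed m ξ + m) : ℝ) : ℂ) * (-(ξ 2 : ℂ)) - ((2 * Ed m ξ ^ 2 * (Ed m ξ + m) : ℝ) : ℂ) * pauli l 1 1,
       0, ((-(m * ξ l) * (Ed m ξ + m) : ℝ) : ℂ)]

lemma PAUP (A U : Matrix (Fin 4) (Fin 4) ℂ) :
    !![1,0,0,0; 0,1,0,0; 0,0,0,0; 0,0,0,0] * A * U * !![1,0,0,0; 0,1,0,0; 0,0,0,0; 0,0,0,0]
    = !![∑ k : Fin 4, A 0 k * U k 0, ∑ k : Fin 4, A 0 k * U k 1, 0, 0;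
         ∑ k : Fin 4, A 1 k * U k 0, ∑ k : Fin 4, A 1 k * U k 1, 0, 0;
         0,0,0,0; 0,0,0,0] := by
  ext i j
  fin_cases i <;> fin_cases j <;>
    simp [Matrix.mul_apply, Matrix.vecMul, dotProduct, Fin.sum_univ_four,
      Matrix.vecHead, Matrix.vecTail]

set_option maxHeartbeats 1000000 in
lemma main_lemma (m : ℝ) (ξ v : Fin 3 → ℝ)
    (he2C : ((Ed m ξ : ℂ))^2 = (m:ℂ)^2 + (ξ 0:ℂ)^2 + (ξ 1:ℂ)^2 + (ξ 2:ℂ)^2) :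
    (-Complex.I) • (∑ l : Fin 3, (v l : ℂ) •
        (!![1,0,0,0; 0,1,0,0; 0,0,0,0; 0,0,0,0] * Alit m ξ l * Ulit m ξ *
          !![1,0,0,0; 0,1,0,0; 0,0,0,0; 0,0,0,0]))
      = ((2 * Ed m ξ ^ 2 * (Ed m ξ + m) : ℝ) : ℂ) • Matrix.reindex finSumFinEquiv finSumFinEquiv
          (Matrix.fromBlocks (∑ k : Fin 3, ((cross3 v ξ) k : ℂ) • pauli k) 0 0
            (0 : Matrix (Fin 2) (Fin 2) ℂ)) := by
  simp only [PAUP, blocks_eq]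
  ext i j
  fin_cases i <;> fin_cases j <;>
    simp [Alit, Ulit, cross3, pauli, Fin.sum_univ_three, Fin.sum_univ_four,
      Matrix.sum_apply, Matrix.vecHead, Matrix.vecTail] <;>
    push_cast
  · linear_combination (-2*((Ed m ξ:ℝ):ℂ)^2*(m:ℂ)*(ξ 1:ℂ)*(v 0:ℂ) + 2*((Ed m ξ:ℝ):ℂ)^2*(m:ℂ)*(ξ 0:ℂ)*(v 1:ℂ) + -2*((Ed m ξ:ℝ):ℂ)^3*(ξ 1:ℂ)*(v 0:ℂ) + 2*((Ed m ξ:ℝ):ℂ)^3*(ξ 0:ℂ)*(v 1:ℂ) + -1*Complex.I*(m:ℂ)*(ξ 1:ℂ)^2*(ξ 2:ℂ)*(v 2:ℂ) + -1*Complex.I*(m:ℂ)*(ξ 1:ℂ)^3*(v 1:ℂ) + -1*Complex.I*(m:ℂ)*(ξ 0:ℂ)*(ξ 1:ℂ)^2*(v 0:ℂ) + -2*Complex.I*((Ed m ξ:ℝ):ℂ)*(ξ 1:ℂ)^2*(ξ 2:ℂ)*(v 2:ℂ) + -2*Complex.I*((Ed m ξ:ℝ):ℂ)*(ξ 1:ℂ)^3*(v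 1:ℂ) + -2*Complex.I*((Ed m ξ:ℝ):ℂ)*(ξ 0:ℂ)*(ξ 1:ℂ)^2*(v 0:ℂ) + 2*Complex.I*((Ed m ξ:ℝ):ℂ)^2*(m:ℂ)*(ξ 1:ℂ)*(v 1:ℂ) + 2*Complex.I*((Ed m ξ:ℝ):ℂ)^3*(ξ 1:ℂ)*(v 1:ℂ)) * Complex.I_sq + (-1*Complex.I*(m:ℂ)*(ξ 2:ℂ)*(v 2:ℂ) + -1*Complex.I*(m:ℂ)*(ξ 1:ℂ)*(v 1:ℂ) + -1*Complex.I*(m:ℂ)*(ξ 0:ℂ)*(v 0:ℂ) + -2*Complex.I*((Ed m ξ:ℝ):ℂ)*(ξ 2:ℂ)*(v 2:ℂ) + -2*Complex.I*((Ed m ξ:ℝ):ℂ)*(ξ 1:ℂ)*(v 1:ℂ) + -2*Complex.I*((Ed m ξ:ℝ):ℂ)*(ξ 0:ℂ)*(v 0:ℂ)) * he2C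
  · linear_combination (-2*((Ed m ξ:ℝ):ℂ)^2*(m:ℂ)*(ξ 2:ℂ)*(v 1:ℂ) + 2*((Ed m ξ:ℝ):ℂ)^2*(m:ℂ)*(ξ 1:ℂ)*(v 2:ℂ) + -2*((Ed m ξ:ℝ):ℂ)^3*(ξ 2:ℂ)*(v 1:ℂ) + 2*((Ed m ξ:ℝ):ℂ)^3*(ξ 1:ℂ)*(v 2:ℂ)) * Complex.I_sq + (0:ℂ) * he2C
  · linear_combination (-2*((Ed m ξ:ℝ):ℂ)^2*(m:ℂ)*(ξ 2:ℂ)*(v 1:ℂ) + 2*((Ed m ξ:ℝ):ℂ)^2*(m:ℂ)*(ξ 1:ℂ)*(v 2:ℂ) + -2*((Ed m ξ:ℝ):ℂ)^3*(ξ 2:ℂ)*(v 1:ℂ) + 2*((Ed m ξ:ℝ):ℂ)^3*(ξ 1:ℂ)*(v 2:ℂ)) * Complex.I_sq + (0:ℂ) * he2C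
  · linear_combination (2*((Ed m ξ:ℝ):ℂ)^2*(m:ℂ)*(ξ 1:ℂ)*(v 0:ℂ) + -2*((Ed m ξ:ℝ):ℂ)^2*(m:ℂ)*(ξ 0:ℂ)*(v 1:ℂ) + 2*((Ed m ξ:ℝ):ℂ)^3*(ξ 1:ℂ)*(v 0:ℂ) + -2*((Ed m ξ:ℝ):ℂ)^3*(ξ 0:ℂ)*(v 1:ℂ) + -1*Complex.I*(m:ℂ)*(ξ 1:ℂ)^2*(ξ 2:ℂ)*(v 2:ℂ) + -1*Complex.I*(m:ℂ)*(ξ 1:ℂ)^3*(v 1:ℂ) + -1*Complex.I*(m:ℂ)*(ξ 0:ℂ)*(ξ 1:ℂ)^2*(v 0:ℂ) + -2*Complex.I*((Ed m ξ:ℝ):ℂ)*(ξ 1:ℂ)^2*(ξ 2:ℂ)*(v 2:ℂ) + -2*Complex.I*((Ed m ξ:ℝ):ℂ)*(ξ 1:ℂ)^3*(v 1:ℂ) + -2*Complex.I*((Ed m ξ:ℝ):ℂ)*(ξ 0:ℂ)*(ξ 1:ℂ)^2*(v 0:ℂ) + 2*Complex.I*((Ed m ξ:ℝ):ℂ)^2*(m:ℂ)*(ξ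 1:ℂ)*(v 1:ℂ) + 2*Complex.I*((Ed m ξ:ℝ):ℂ)^3*(ξ 1:ℂ)*(v 1:ℂ)) * Complex.I_sq + (-1*Complex.I*(m:ℂ)*(ξ 2:ℂ)*(v 2:ℂ) + -1*Complex.I*(m:ℂ)*(ξ 1:ℂ)*(v 1:ℂ) + -1*Complex.I*(m:ℂ)*(ξ 0:ℂ)*(v 0:ℂ) + -2*Complex.I*((Ed m ξ:ℝ):ℂ)*(ξ 2:ℂ)*(v 2:ℂ) + -2*Complex.I*((Ed m ξ:ℝ):ℂ)*(ξ 1:ℂ)*(v 1:ℂ) + -2*Complex.I*((Ed m ξ:ℝ):ℂ)*(ξ 0:ℂ)*(v 0:ℂ)) * he2C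

set_option maxHeartbeats 2000000 in
/-- The gradient-coupling term of the effective semirelativistic Hamiltonian:
`-i Σ_l v_l π_ref D_l(ξ) u₀(ξ)* π_ref = (1/(2E(E+m))) M`, where `M` has upper-left
`2×2` block `(v × ξ)·σ` and zeros elsewhere. -/
theorem statement18 (m : ℝ) (hm : 0 < m) (ξ v : Fin 3 → ℝ) :
    (-Complex.I) • (∑ l : Fin 3, (v l : ℂ) • (piRef * Dmat m ξ l * (u0 m ξ)ᴴ * piRef))
      = (((2 * Ed m ξ * (Ed m ξ + m))⁻¹ : ℝ) : ℂ) •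
          Matrix.reindex finSumFinEquiv finSumFinEquiv
            (Matrix.fromBlocks (∑ k : Fin 3, ((cross3 v ξ) k : ℂ) • pauli k) 0 0
              (0 : Matrix (Fin 2) (Fin 2) ℂ)) := by
  have he2 : Ed m ξ ^ 2 = m ^ 2 + ∑ j, ξ j ^ 2 := Real.sq_sqrt (by positivity)
  have he : 0 < Ed m ξ := Real.sqrt_pos.mpr (by positivity)
  have hem : 0 < Ed m ξ + m := by linarith
  set s := Real.sqrt (2 * Ed m ξ * (Ed m ξ + m)) with hs_def
  have hs : 0 < s := Real.sqrt_pos.mpr (by positivity)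
  have hs2 : s ^ 2 = 2 * Ed m ξ * (Ed m ξ + m) := Real.sq_sqrt (by positivity)
  set e := Ed m ξ with he_def
  have key1 : Real.sqrt 2 * e ^ ((5:ℝ)/2) * (e+m) ^ ((1:ℝ)/2) = e^2 * s := by
    rw [show ((5:ℝ)/2) = ((2:ℕ):ℝ) + (1:ℝ)/2 by norm_num, Real.rpow_add he, Real.rpow_natCast,
      ← Real.sqrt_eq_rpow, ← Real.sqrt_eq_rpow, hs_def, Real.sqrt_mul (by positivity),
      Real.sqrt_mul (by norm_num)]
    ring
  have key2 : Real.sqrt 2 * e ^ ((5:ℝ)/2) * (e+m) ^ ((3:ℝ)/2) = e^2 * (e+m) * s := by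
    rw [show ((5:ℝ)/2) = ((2:ℕ):ℝ) + (1:ℝ)/2 by norm_num,
      show ((3:ℝ)/2) = ((1:ℕ):ℝ) + (1:ℝ)/2 by norm_num, Real.rpow_add he, Real.rpow_add hem,
      Real.rpow_natCast, Real.rpow_natCast, ← Real.sqrt_eq_rpow, ← Real.sqrt_eq_rpow, hs_def,
      Real.sqrt_mul (by positivity), Real.sqrt_mul (by norm_num)]
    ring
  have hsne : s ≠ 0 := ne_of_gt hs
  have hene : e ≠ 0 := ne_of_gt he
  have hemne : e + m ≠ 0 := ne_of_gt hem
  have hc1 : ∀ l : Fin 3, -(m * ξ l) / (2 * Real.sqrt 2 * e ^ ((5:ℝ)/2) * (e+m) ^ ((1:ℝ)/2))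
      = s⁻¹ * (2 * e^2 * (e+m))⁻¹ * (-(m * ξ l) * (e+m)) := by
    intro l
    rw [show 2 * Real.sqrt 2 * e ^ ((5:ℝ)/2) * (e+m) ^ ((1:ℝ)/2)
      = 2 * (e^2 * s) by linear_combination 2 * key1]
    field_simp
    try ring
    try tauto
  have hc2 : ∀ l : Fin 3, ξ l * (2 * e + m) / (2 * Real.sqrt 2 * e ^ ((5:ℝ)/2) * (e+m) ^ ((3:ℝ)/2))
      = s⁻¹ * (2 * e^2 * (e+m))⁻¹ * (ξ l * (2 * e + m)) := by
    intro l
    rw [show 2 * Real.sqrt 2 * e ^ ((5:ℝ)/2) * (e+m) ^ ((3:ℝ)/2)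
      = 2 * (e^2 * (e+m) * s) by linear_combination 2 * key2]
    field_simp
    try ring
    try tauto
  have hc3 : (s⁻¹ : ℝ) = s⁻¹ * (2 * e^2 * (e+m))⁻¹ * (2 * e^2 * (e+m)) := by
    field_simp
  have he2C : ((e:ℝ):ℂ)^2 = (m:ℂ)^2 + (ξ 0:ℂ)^2 + (ξ 1:ℂ)^2 + (ξ 2:ℂ)^2 := by
    have h := congrArg (Complex.ofReal) he2
    push_cast [Fin.sum_univ_three] at h
    linear_combination h
  -- u₀ᴴ as a scalar multiple of an explicit matrix
  have hU : (u0 m ξ)ᴴ = ((s⁻¹ : ℝ) : ℂ) • Ulit m ξ := by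
    ext i j
    fin_cases i <;> fin_cases j <;>
      simp [u0, Ulit, xiDotAlpha, Fin.sum_univ_three, alpha_eq, beta_eq, pauli,
        Matrix.conjTranspose_apply, Matrix.mul_apply, Fin.sum_univ_four, ← he_def, ← hs_def,
        Matrix.vecHead, Matrix.vecTail, Complex.ext_iff] <;>
      (try constructor) <;> (try tauto) <;> (try ring)
  -- D_l as a scalar multiple of an explicit matrix
  have hD : ∀ l : Fin 3, Dmat m ξ l = ((s⁻¹ * (2 * e^2 * (e+m))⁻¹ : ℝ) : ℂ) • Alit m ξ l := by
    intro l
    have hd0 : Dmat m ξ l =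
        ((s⁻¹ * (2 * e^2 * (e+m))⁻¹ * (-(m * ξ l) * (e+m)) : ℝ) : ℂ) • (1 : Matrix (Fin 4) (Fin 4) ℂ)
        + ((s⁻¹ * (2 * e^2 * (e+m))⁻¹ * (ξ l * (2 * e + m)) : ℝ) : ℂ) • (xiDotAlpha ξ * diracBeta)
        - ((s⁻¹ * (2 * e^2 * (e+m))⁻¹ * (2 * e^2 * (e+m)) : ℝ) : ℂ) • (diracAlpha l * diracBeta) := by
      rw [Dmat, ← hc1 l, ← hc2 l, ← hc3, ← he_def, ← hs_def]
    rw [hd0]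
    ext i j
    fin_cases i <;> fin_cases j <;>
      simp [Alit, xiDotAlpha, Fin.sum_univ_three, alpha_eq, beta_eq, pauli,
        Matrix.mul_apply, Fin.sum_univ_four, Matrix.vecHead, Matrix.vecTail, ← he_def] <;>
      push_cast <;> ring
  -- assemble
  have hmain := main_lemma m ξ v he2C
  rw [piRef_eq]
  have hstep : (-Complex.I) • (∑ l : Fin 3, (v l : ℂ) •
        (!![1,0,0,0; 0,1,0,0; 0,0,0,0; 0,0,0,0] * Dmat m ξ l * (u0 m ξ)ᴴ *
          !![1,0,0,0; 0,1,0,0; 0,0,0,0; 0,0,0,0]))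
      = (((s⁻¹ * (2 * e^2 * (e+m))⁻¹ : ℝ) : ℂ) * ((s⁻¹ : ℝ) : ℂ)) •
        ((-Complex.I) • (∑ l : Fin 3, (v l : ℂ) •
          (!![1,0,0,0; 0,1,0,0; 0,0,0,0; 0,0,0,0] * Alit m ξ l * Ulit m ξ *
            !![1,0,0,0; 0,1,0,0; 0,0,0,0; 0,0,0,0]))) := by
    simp only [hD, hU, Fin.sum_univ_three, Matrix.mul_smul, Matrix.smul_mul]
    module
  rw [hstep, hmain, smul_smul]
  congr 1
  have hr : (s⁻¹ * (2 * e^2 * (e+m))⁻¹) * s⁻¹ * (2 * e^2 * (e+m)) = (2 * e * (e+m))⁻¹ := by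
    rw [show (2 * e * (e+m)) = s^2 by rw [hs2]]
    field_simp
  calc ((s⁻¹ * (2 * e ^ 2 * (e + m))⁻¹ : ℝ) : ℂ) * ((s⁻¹ : ℝ) : ℂ) * ((2 * e ^ 2 * (e + m) : ℝ) : ℂ)
      = (((s⁻¹ * (2 * e^2 * (e+m))⁻¹) * s⁻¹ * (2 * e^2 * (e+m)) : ℝ) : ℂ) := by push_cast; ring
    _ = (((2 * e * (e+m))⁻¹ : ℝ) : ℂ) := by rw [hr]
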